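/- Let A be a principally polarized abelian variety over a number field L with the standard Weil pairing e_n : A[n] × A[n] → μ_n, and let O be an order of a number field M acting on A with O stable under the Rosati involution a ↦ ā. Then for fixed P, Q ∈ A[n], the map O/n → ℤ/n, a ↦ e_n(P, a·Q), is ℤ-linear, and there exists a unique element 𝕖_n(P,Q) ∈ O*/n (where O* is the inverse different) with e_n(P, a·Q) = Tr_{M/ℚ}(𝕖_n(P,Q)·a) for all a ∈ O/n; moreover the resulting pairing 𝕖_n is skew-Hermitian: 𝕖_n(P,Q) = -conj(𝕖_n(Q,P)). -/

import Mathlib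

open Finset in
lemma aux_exists {M : Type*} [Field M] [NumberField M] (O : Subalgebra ℤ M)
    [Module.Finite ℤ O]
    (hfull : ∀ x : M, ∃ (k : ℤ) (y : O), k ≠ 0 ∧ (k : M) * x = (y : M))
    (n : ℕ) [NeZero n] (φ : O →+ ZMod n) :
    ∃ ε : M, ∀ a : O, ∃ k : ℤ,
      Algebra.trace ℚ M (ε * (a : M)) = (k : ℚ) ∧ (k : ZMod n) = φ a := by
  classical
  set f : O →ₗ[ℤ] M := (Subalgebra.val O).toLinearMap with hf
  set b : Module.Basis (Module.Free.ChooseBasisIndex ℤ O) ℤ O := Module.Free.chooseBasis ℤ O with hbdef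
  set v : Module.Free.ChooseBasisIndex ℤ O → M := fun i => (b i : M) with hv
  have hinj : Function.Injective f := Subtype.val_injective
  have hliZ : LinearIndependent ℤ v := b.linearIndependent.map' f (LinearMap.ker_eq_bot.mpr hinj)
  have hli : LinearIndependent ℚ v := (LinearIndependent.iff_fractionRing ℤ ℚ).mp hliZ
  have hsp : ⊤ ≤ Submodule.span ℚ (Set.range v) := by
    intro x _
    obtain ⟨k, y, hk, hky⟩ := hfull x
    have h1 : (y : M) ∈ Submodule.span ℤ (Set.range v) := by
      have h0 : Submodule.map f (Submodule.span ℤ (Set.range ⇑b)) =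
          Submodule.span ℤ (Set.range v) := by
        rw [Submodule.map_span, ← Set.range_comp]; rfl
      rw [← h0]; exact ⟨y, b.mem_span y, rfl⟩
    have h2 : (y : M) ∈ Submodule.span ℚ (Set.range v) :=
      Submodule.span_subset_span ℤ ℚ _ h1
    have hkM : (k : M) ≠ 0 := Int.cast_ne_zero.mpr hk
    have hx : x = ((k : ℚ)⁻¹) • (y : M) := by
      rw [Rat.smul_def, Rat.cast_inv, Rat.cast_intCast, ← hky]
      field_simp
    rw [hx]
    exact Submodule.smul_mem _ _ h2
  set bM : Module.Basis (Module.Free.ChooseBasisIndex ℤ O) ℚ M := Module.Basis.mk hli hsp with hbM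
  have hbMv : ∀ i, bM i = v i := fun i => Module.Basis.mk_apply hli hsp i
  set B := Algebra.traceForm ℚ M with hBdef
  have hB : B.Nondegenerate := traceForm_nondegenerate ℚ M
  set d := B.dualBasis hB bM with hd
  set c : Module.Free.ChooseBasisIndex ℤ O → ℤ := fun i => ((φ (b i)).val : ℤ) with hc
  have hcn : ∀ i, ((c i : ℤ) : ZMod n) = φ (b i) := by
    intro i
    simp only [hc]
    push_cast
    exact ZMod.natCast_rightInverse _
  refine ⟨∑ i, (c i : ℚ) • d i, fun a => ?_⟩
  have hav : (a : M) = ∑ j, b.repr a j • v j := by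
    have := congrArg f (b.sum_repr a).symm
    simpa [hf, hv, map_sum, map_smul] using this
  have key : ∀ j, B (∑ i, (c i : ℚ) • d i) (v j) = (c j : ℚ) := by
    intro j
    rw [← hbMv j, map_sum, LinearMap.sum_apply]
    simp only [hd, map_smul, LinearMap.smul_apply, smul_eq_mul,
      LinearMap.BilinForm.apply_dualBasis_left hB bM]
    simp [Finset.sum_ite_eq]
  refine ⟨∑ j, c j * b.repr a j, ?_, ?_⟩
  · have : Algebra.trace ℚ M ((∑ i, (c i : ℚ) • d i) * (a : M)) =
        B (∑ i, (c i : ℚ) • d i) (a : M) := rfl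
    rw [this, hav, map_sum]
    simp only [map_zsmul, key]
    push_cast [zsmul_eq_mul]
    exact Finset.sum_congr rfl fun j _ => mul_comm _ _
  · conv_rhs => rw [show a = ∑ j, b.repr a j • b j from (b.sum_repr a).symm, map_sum]
    push_cast
    refine Finset.sum_congr rfl (fun j _ => ?_)
    rw [map_zsmul, zsmul_eq_mul, ← hcn j]
    ring


lemma aux_div {M : Type*} [Field M] [NumberField M] (O : Subalgebra ℤ M)
    (n : ℕ) (hn : 0 < n) (ζ : M)
    (h : ∀ a : O, ∃ k : ℤ, Algebra.trace ℚ M (ζ * (a : M)) = (k : ℚ) ∧ (k : ZMod n) = 0) :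
    ∃ δ ∈ {x : M | ∀ y ∈ O, ∃ k : ℤ, Algebra.trace ℚ M (x * y) = (k : ℚ)},
      ζ = (n : M) * δ := by
  have hnQ : (n : ℚ) ≠ 0 := Nat.cast_ne_zero.mpr hn.ne'
  have hnM : (n : M) ≠ 0 := Nat.cast_ne_zero.mpr hn.ne'
  refine ⟨(n : M)⁻¹ * ζ, ?_, by field_simp⟩
  intro y hy
  obtain ⟨k, hk, hk0⟩ := h ⟨y, hy⟩
  obtain ⟨m, hm⟩ : (n : ℤ) ∣ k := by
    exact_mod_cast (ZMod.intCast_zmod_eq_zero_iff_dvd k n).mp hk0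
  refine ⟨m, ?_⟩
  have h1 : (n : M)⁻¹ * ζ * y = ((n : ℚ)⁻¹) • (ζ * y) := by
    rw [Rat.smul_def]; push_cast; ring
  rw [h1, map_smul, smul_eq_mul, hk, hm]
  push_cast
  field_simp

/-- Abstract form of the refined Weil pairing construction.  Let `O` be an order in a number
field `M` (stable under the Rosati involution `σ`), `O*` its codifferent, `n > 0`, and let
`G` (playing the role of `A[n]` for a principally polarized abelian variety) be an
`O`-module equipped with a `ℤ`-bilinear alternating pairing `e : G × G → ℤ/n` (the Weil
pairing) for which `a` and `σ a` are adjoint.  Then for all `P, Q ∈ G`: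
the map `a ↦ e(P, a Q)` is `ℤ`-linear on `O/n`; there is an `ε = 𝕖_n(P,Q) ∈ O*`, unique
modulo `n O*`, with `e(P, aQ) = Tr_{M/ℚ}(ε a) mod n` for all `a ∈ O`; and the resulting
pairing is skew-Hermitian: `𝕖_n(P,Q) = -σ(𝕖_n(Q,P))` in `O*/n`. -/
theorem stmt18 (M : Type*) [Field M] [NumberField M]
    (O : Subalgebra ℤ M) [Module.Finite ℤ O]
    (hfull : ∀ x : M, ∃ (k : ℤ) (y : O), k ≠ 0 ∧ (k : M) * x = (y : M))
    (σ : M ≃+* M) (hσO : ∀ x ∈ O, σ x ∈ O)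
    (n : ℕ) (hn : 0 < n)
    (G : Type*) [AddCommGroup G] [Module O G]
    (e : G → G → ZMod n)
    (he1 : ∀ P Q T : G, e (P + Q) T = e P T + e Q T)
    (he2 : ∀ P Q T : G, e P (Q + T) = e P Q + e P T)
    (halt : ∀ P : G, e P P = 0)
    (hadj : ∀ (a : O) (P Q : G), e (a • P) Q = e P ((⟨σ a, hσO a a.2⟩ : O) • Q)) :
    let Ostar : Set M := {x | ∀ y ∈ O, ∃ k : ℤ, Algebra.trace ℚ M (x * y) = (k : ℚ)}
    let Repr : G → G → M → Prop := fun P Q ε =>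
      ε ∈ Ostar ∧ ∀ a : O, ∃ k : ℤ,
        Algebra.trace ℚ M (ε * (a : M)) = (k : ℚ) ∧ (k : ZMod n) = e P (a • Q)
    -- `a ↦ e(P, a·Q)` is `ℤ`-linear and factors through `O/n`
    (∀ (P Q : G) (a b : O), e P ((a + b) • Q) = e P (a • Q) + e P (b • Q)) ∧
    (∀ (P Q : G) (a : O), e P (((n : ℤ) • a) • Q) = 0) ∧
    -- existence and uniqueness modulo `n·O*` of `𝕖_n(P,Q) ∈ O*/n`
    (∀ P Q : G, ∃ ε : M, Repr P Q ε) ∧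
    (∀ (P Q : G) (ε ε' : M), Repr P Q ε → Repr P Q ε' →
      ∃ δ ∈ Ostar, ε - ε' = (n : M) * δ) ∧
    -- the pairing `𝕖_n` is skew-Hermitian
    (∀ (P Q : G) (ε ε' : M), Repr P Q ε → Repr Q P ε' →
      ∃ δ ∈ Ostar, ε + σ ε' = (n : M) * δ) := by
  intro Ostar Repr
  haveI : NeZero n := ⟨hn.ne'⟩
  have he0 : ∀ P : G, e P 0 = 0 := by
    intro P
    have h := he2 P 0 0
    rw [add_zero] at h
    exact (left_eq_add.mp h)
  let φ : G → G → (O →+ ZMod n) := fun P Q =>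
    { toFun := fun a => e P (a • Q)
      map_zero' := by show e P ((0 : O) • Q) = 0; rw [zero_smul]; exact he0 P
      map_add' := fun a b => by
        show e P ((a + b) • Q) = e P (a • Q) + e P (b • Q)
        rw [add_smul]; exact he2 P _ _ }
  have hskew : ∀ X Y : G, e X Y = - e Y X := by
    intro X Y
    have h := halt (X + Y)
    rw [he1, he2, he2, halt, halt] at h
    linear_combination h
  -- the automorphism σ as a ℚ-algebra automorphism
  have hcomm : ∀ q : ℚ, σ (algebraMap ℚ M q) = algebraMap ℚ M q := by
    intro q
    rw [eq_ratCast (algebraMap ℚ M) q]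
    exact map_ratCast σ q
  let σ' : M ≃ₐ[ℚ] M := AlgEquiv.ofRingEquiv (f := σ) hcomm
  have htr : ∀ x : M, Algebra.trace ℚ M (σ x) = Algebra.trace ℚ M x := fun x =>
    Algebra.trace_eq_of_algEquiv σ' x
  haveI := AlgEquiv.fintype ℚ M
  obtain ⟨m, hm, hm1⟩ := isOfFinOrder_iff_pow_eq_one.mp (isOfFinOrder_of_finite σ')
  have hpow : ∀ (k : ℕ) (x : M), x ∈ O → (σ' ^ k) x ∈ O := by
    intro k
    induction k with
    | zero => intro x hx; simpa using hx
    | succ k ih =>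
        intro x hx
        rw [pow_succ]
        exact ih _ (hσO x hx)
  have hσinv : ∀ a : O, ∃ a' : O, σ (a' : M) = (a : M) := by
    intro a
    refine ⟨⟨(σ' ^ (m - 1)) a, hpow _ _ a.2⟩, ?_⟩
    show σ ((σ' ^ (m - 1)) (a : M)) = (a : M)
    have h1 : σ ((σ' ^ (m - 1)) (a : M)) = (σ' ^ m) (a : M) := by
      conv_rhs => rw [← Nat.succ_pred_eq_of_pos hm, pow_succ']
      rfl
    rw [h1, hm1]
    rfl
  refine ⟨?_, ?_, ?_, ?_, ?_⟩
  · intro P Q a b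
    rw [add_smul]
    exact he2 P _ _
  · intro P Q a
    show (φ P Q) ((n : ℤ) • a) = 0
    rw [map_zsmul, zsmul_eq_mul]
    simp
  · intro P Q
    obtain ⟨ε, hε⟩ := aux_exists O hfull n (φ P Q)
    exact ⟨ε, fun y hy => (hε ⟨y, hy⟩).elim fun k hk => ⟨k, hk.1⟩, hε⟩
  · intro P Q ε ε' hε hε'
    apply aux_div O n hn
    intro a
    obtain ⟨k, hk, hke⟩ := hε.2 a
    obtain ⟨k', hk', hk'e⟩ := hε'.2 a
    refine ⟨k - k', ?_, ?_⟩
    · rw [sub_mul, map_sub, hk, hk']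
      push_cast
      ring
    · rw [Int.cast_sub, hke, hk'e, sub_self]
  · intro P Q ε ε' hε hε'
    apply aux_div O n hn
    intro a
    obtain ⟨a', ha'⟩ := hσinv a
    obtain ⟨k, hk, hke⟩ := hε.2 a
    obtain ⟨k', hk', hk'e⟩ := hε'.2 a'
    refine ⟨k + k', ?_, ?_⟩
    · have h2 : σ ε' * (a : M) = σ (ε' * (a' : M)) := by rw [map_mul, ha']
      rw [add_mul, map_add, hk, h2, htr, hk']
      push_cast
      ring
    · have hadj' : e (a' • P) Q = e P (a • Q) := by
        have h := hadj a' P Q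
        rwa [show (⟨σ a', hσO _ a'.2⟩ : O) = a from Subtype.ext ha'] at h
      rw [Int.cast_add, hke, hk'e, hskew Q (a' • P), hadj']
      exact add_neg_cancel _
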